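/- Let S_t = S_0 e^{X_t} where X is a BGIG(a₊,b₊,p₊,a₋,b₋,p₋) Lévy process with a₊ > 2, defined on a filtered probability space. Then (S_t) is a martingale if and only if (a₊/(a₊-2))^(p₊/2) · K_{p₊}(√(b₊(a₊-2)))/K_{p₊}(√(b₊a₊)) · (a₋/(a₋+2))^(p₋/2) · K_{p₋}(√(b₋(a₋+2)))/K_{p₋}(√(b₋a₋)) = 1. -/

import Mathlib

open MeasureTheory Real Filter Set
open scoped NNReal ENNReal

/-- Modified Bessel function of the second kind (real order, `x > 0`). -/
noncomputable def besselK (p x : ℝ) : ℝ :=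
  ∫ t in Set.Ioi (0:ℝ), Real.exp (-x * Real.cosh t) * Real.cosh (p * t)

/-- The generalized inverse Gaussian density on `(0, ∞)`. -/
noncomputable def gigDensity (a b p x : ℝ) : ℝ :=
  if 0 < x then
    (a / b) ^ (p / 2) / (2 * besselK p (Real.sqrt (a * b)))
      * x ^ (p - 1) * Real.exp (-(a * x + b / x) / 2)
  else 0

/-- The BGIG density of `X₊ - X₋` (convolution of the two GIG densities). -/
noncomputable def bgigDensity (ap bp pp am bm pm x : ℝ) : ℝ :=
  ∫ y in Set.Ioi (0:ℝ), gigDensity ap bp pp (x + y) * gigDensity am bm pm y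

/-- A (real-valued) Lévy process with respect to a filtration: adapted, starting at `0`,
with increments independent of the past, stationary increments, and stochastic continuity. -/
structure IsLevyProcess {Ω : Type*} [m : MeasurableSpace Ω] (μ : MeasureTheory.Measure Ω)
    (𝓕 : MeasureTheory.Filtration ℝ≥0 m) (X : ℝ≥0 → Ω → ℝ) : Prop where
  adapted : MeasureTheory.Adapted 𝓕 X
  zero : ∀ᵐ ω ∂μ, X 0 ω = 0
  indep_increments : ∀ s t : ℝ≥0, s ≤ t →
    ProbabilityTheory.Indep
      (MeasurableSpace.comap (fun ω => X t ω - X s ω) Real.measurableSpace) (𝓕 s) μ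
  stationary_increments : ∀ s t : ℝ≥0,
    μ.map (fun ω => X (s + t) ω - X s ω) = μ.map (X t)
  stochastically_continuous : ∀ (t : ℝ≥0) (ε : ℝ), 0 < ε →
    Filter.Tendsto (fun s : ℝ≥0 => μ {ω | ε ≤ |X s ω - X t ω|}) (nhds t) (nhds 0)


-- ### Auxiliary analytic lemmas ###

lemma cosh_quarter_sq_le (t : ℝ) : t ^ 2 / 4 ≤ Real.cosh t := by
  rw [← Real.cosh_abs]
  have h0 : 0 ≤ |t| := abs_nonneg t
  have h1 : 1 + |t| + t ^ 2 / 2 ≤ Real.exp |t| := by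
    have := Real.sum_le_exp_of_nonneg h0 3
    simp [Finset.sum_range_succ] at this
    nlinarith [this]
  have h2 : Real.exp |t| / 2 ≤ Real.cosh |t| := by
    rw [Real.cosh_eq]
    nlinarith [Real.exp_pos (-|t|)]
  nlinarith

lemma kernel_exp_le (s p t : ℝ) (hs : 0 < s) :
    p * t - s * Real.cosh t ≤ 2 * p ^ 2 / s - s / 8 * t ^ 2 := by
  have h1 := cosh_quarter_sq_le t
  have h2 : p * t ≤ |p| * |t| := by
    calc p * t ≤ |p * t| := le_abs_self _
    _ = |p| * |t| := abs_mul p t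
  have h3 : 8 * s * (|p| * |t|) ≤ 16 * p ^ 2 + s ^ 2 * t ^ 2 := by
    nlinarith [sq_nonneg (4 * |p| - s * |t|), sq_abs p, sq_abs t]
  have hs8 : (0:ℝ) < 8 * s := by linarith
  rw [← mul_le_mul_iff_of_pos_left hs8]
  have hrhs : 8 * s * (2 * p ^ 2 / s - s / 8 * t ^ 2) = 16 * p ^ 2 - s ^ 2 * t ^ 2 := by
    field_simp; ring
  rw [hrhs]
  nlinarith [mul_le_mul_of_nonneg_left h1 (show (0:ℝ) ≤ 8 * s ^ 2 by positivity)]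

lemma integrable_kernel (s p : ℝ) (hs : 0 < s) :
    Integrable (fun t => Real.exp (p * t - s * Real.cosh t)) := by
  have hi : Integrable (fun t : ℝ => Real.exp (2 * p ^ 2 / s) * Real.exp (-(s/8) * t ^ 2)) :=
    (integrable_exp_neg_mul_sq (show (0:ℝ) < s/8 by linarith)).const_mul _
  refine hi.mono' ?_ ?_
  · exact (Real.continuous_exp.comp ((continuous_mul_left p).sub
      (continuous_const.mul Real.continuous_cosh))).aestronglyMeasurable
  · refine Eventually.of_forall fun t => ?_
    rw [Real.norm_eq_abs, abs_of_pos (Real.exp_pos _), ← Real.exp_add]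
    apply Real.exp_le_exp.mpr
    have := kernel_exp_le s p t hs
    linarith

lemma cosh_le_exp_abs (y : ℝ) : Real.cosh y ≤ Real.exp |y| := by
  rw [← Real.cosh_abs, Real.cosh_eq]
  nlinarith [Real.exp_pos (-|y|), Real.exp_pos |y|,
    Real.exp_le_exp.mpr (neg_abs_le y), Real.exp_le_exp.mpr (le_abs_self y)]

lemma integrableOn_besselK_kernel (p : ℝ) {x : ℝ} (hx : 0 < x) :
    IntegrableOn (fun t => Real.exp (-x * Real.cosh t) * Real.cosh (p * t)) (Set.Ioi 0) := by
  have hi := (integrable_kernel x |p| hx).integrableOn (s := Set.Ioi (0:ℝ))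
  refine hi.mono' ?_ ?_
  · exact ((Real.continuous_exp.comp ((continuous_const.mul Real.continuous_cosh))).mul
      (Real.continuous_cosh.comp (continuous_mul_left p))).aestronglyMeasurable
  · refine (ae_restrict_iff' measurableSet_Ioi).mpr (Eventually.of_forall fun t ht => ?_)
    have ht0 : (0:ℝ) ≤ t := le_of_lt ht
    rw [Real.norm_eq_abs, abs_of_pos (mul_pos (Real.exp_pos _) (Real.cosh_pos _))]
    calc Real.exp (-x * Real.cosh t) * Real.cosh (p * t)
        ≤ Real.exp (-x * Real.cosh t) * Real.exp |p * t| :=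
          mul_le_mul_of_nonneg_left (cosh_le_exp_abs _) (Real.exp_pos _).le
      _ = Real.exp (|p| * t - x * Real.cosh t) := by
          rw [← Real.exp_add, abs_mul, abs_of_nonneg ht0]; ring_nf
      _ ≤ Real.exp (|p| * t - x * Real.cosh t) := le_refl _

lemma besselK_pos (p : ℝ) {x : ℝ} (hx : 0 < x) : 0 < besselK p x := by
  rw [besselK]
  rw [setIntegral_pos_iff_support_of_nonneg_ae]
  · have : Function.support (fun t => Real.exp (-x * Real.cosh t) * Real.cosh (p * t)) = Set.univ := by
      ext t; simp only [Function.mem_support, Set.mem_univ, iff_true]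
      exact (mul_pos (Real.exp_pos _) (Real.cosh_pos _)).ne'
    rw [this, Set.univ_inter]
    simp [Real.volume_Ioi]
  · exact (ae_restrict_iff' measurableSet_Ioi).mpr (Eventually.of_forall fun t _ =>
      (mul_pos (Real.exp_pos _) (Real.cosh_pos _)).le)
  · exact integrableOn_besselK_kernel p hx

lemma integral_kernel_eq_two_besselK (p : ℝ) {s : ℝ} (hs : 0 < s) :
    ∫ t : ℝ, Real.exp (p * t - s * Real.cosh t) = 2 * besselK p s := by
  have hint := integrable_kernel s p hs
  have hint' : Integrable (fun t : ℝ => Real.exp (p * (-t) - s * Real.cosh (-t))) :=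
    hint.comp_neg
  rw [← integral_add_compl (measurableSet_Iic (a := (0:ℝ))) hint]
  rw [compl_Iic, integral_Iic_eq_integral_Iio]
  have h1 : ∫ t in Set.Iio (0:ℝ), Real.exp (p * t - s * Real.cosh t)
      = ∫ t in Set.Ioi (0:ℝ), Real.exp (p * (-t) - s * Real.cosh (-t)) := by
    rw [← integral_Iic_eq_integral_Iio,
        show Set.Iic (0:ℝ) = Set.Iic (-(0:ℝ)) by norm_num,
        ← integral_comp_neg_Ioi (c := (0:ℝ)) (f := fun t => Real.exp (p * t - s * Real.cosh t))]
  rw [h1, ← integral_add (hint'.integrableOn) (hint.integrableOn)]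
  rw [besselK, ← integral_const_mul]
  apply setIntegral_congr_fun measurableSet_Ioi
  intro t _
  simp only [Real.cosh_neg]
  rw [show p * -t - s * Real.cosh t = -(p*t) + (-s * Real.cosh t) by ring,
      show p * t - s * Real.cosh t = p*t + (-s * Real.cosh t) by ring,
      Real.exp_add, Real.exp_add, Real.cosh_eq, Real.cosh_eq]
  ring

lemma key_transform (a b p : ℝ) (ha : 0 < a) (hb : 0 < b) :
    ∀ t : ℝ, |Real.sqrt (b/a) * Real.exp t| •
        ((Real.sqrt (b/a) * Real.exp t) ^ (p - 1) *
          Real.exp (-(a * (Real.sqrt (b/a) * Real.exp t) + b / (Real.sqrt (b/a) * Real.exp t)) / 2))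
      = Real.sqrt (b/a) ^ p * Real.exp (p * t - Real.sqrt (a*b) * Real.cosh t) := by
  intro t
  set c := Real.sqrt (b/a) with hc
  have hc0 : 0 < c := Real.sqrt_pos.mpr (by positivity)
  set s := Real.sqrt (a*b) with hs
  have hac : a * c = s := by
    rw [hc, hs, show a = Real.sqrt (a^2) from (Real.sqrt_sq ha.le).symm, ← Real.sqrt_mul (by positivity)]
    congr 1; field_simp; rw [Real.sq_sqrt (by positivity)]
  have hbc : b / c = s := by
    rw [hc, hs, show b = Real.sqrt (b^2) from (Real.sqrt_sq hb.le).symm]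
    rw [← Real.sqrt_div (by positivity)]
    congr 1; field_simp; rw [Real.sq_sqrt (by positivity)]
  have hexp : a * (c * Real.exp t) + b / (c * Real.exp t) = s * Real.exp t + s * Real.exp (-t) := by
    rw [Real.exp_neg, show s * Real.exp t + s * (Real.exp t)⁻¹
        = (a*c)*Real.exp t + (b/c)*(Real.exp t)⁻¹ by rw [hac, hbc]]
    have he := (Real.exp_pos t).ne'
    field_simp
  rw [hexp, abs_of_pos (by positivity), Real.mul_rpow hc0.le (Real.exp_pos t).le,
      ← Real.exp_mul, smul_eq_mul]
  rw [show c ^ p = c ^ (p - 1 + 1) by norm_num, Real.rpow_add_one hc0.ne' (p-1)]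
  rw [show p * t - s * Real.cosh t = t + (t * (p-1) + (-(s * Real.exp t + s * Real.exp (-t)) / 2))
        by rw [Real.cosh_eq]; ring,
      Real.exp_add, Real.exp_add]
  ring

lemma image_c_exp {c : ℝ} (hc : 0 < c) :
    (fun t : ℝ => c * Real.exp t) '' Set.univ = Set.Ioi 0 := by
  rw [Set.image_univ]
  ext x
  simp only [Set.mem_range, Set.mem_Ioi]
  constructor
  · rintro ⟨t, rfl⟩; positivity
  · intro hx; exact ⟨Real.log (x / c), by rw [Real.exp_log (by positivity)]; field_simp⟩

lemma injOn_c_exp {c : ℝ} (hc : 0 < c) :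
    Set.InjOn (fun t : ℝ => c * Real.exp t) Set.univ := by
  intro u _ v _ h
  exact Real.exp_injective (mul_left_cancel₀ hc.ne' h)

lemma hasDeriv_c_exp (c : ℝ) : ∀ t ∈ Set.univ,
    HasDerivWithinAt (fun t : ℝ => c * Real.exp t) (c * Real.exp t) Set.univ t :=
  fun t _ => ((Real.hasDerivAt_exp t).const_mul c).hasDerivWithinAt

lemma integral_kernel_gig (a b p : ℝ) (ha : 0 < a) (hb : 0 < b) :
    ∫ x in Set.Ioi (0:ℝ), x ^ (p-1) * Real.exp (-(a*x + b/x)/2)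
      = (b/a) ^ (p/2) * (2 * besselK p (Real.sqrt (a*b))) := by
  have hc0 : 0 < Real.sqrt (b/a) := Real.sqrt_pos.mpr (by positivity)
  rw [← image_c_exp hc0,
    integral_image_eq_integral_abs_deriv_smul MeasurableSet.univ (hasDeriv_c_exp _)
      (injOn_c_exp hc0)]
  rw [setIntegral_univ]
  rw [integral_congr_ae (Eventually.of_forall (key_transform a b p ha hb))]
  rw [integral_const_mul, integral_kernel_eq_two_besselK p (Real.sqrt_pos.mpr (by positivity))]
  congr 1
  rw [Real.sqrt_eq_rpow, ← Real.rpow_mul (by positivity : (0:ℝ) ≤ b/a)]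
  congr 1
  ring

lemma integrableOn_kernel_gig (a b p : ℝ) (ha : 0 < a) (hb : 0 < b) :
    IntegrableOn (fun x => x ^ (p-1) * Real.exp (-(a*x + b/x)/2)) (Set.Ioi 0) := by
  have hc0 : 0 < Real.sqrt (b/a) := Real.sqrt_pos.mpr (by positivity)
  rw [← image_c_exp hc0, integrableOn_image_iff_integrableOn_abs_deriv_smul MeasurableSet.univ
    (hasDeriv_c_exp _) (injOn_c_exp hc0)]
  rw [integrableOn_univ]
  have := (integrable_kernel (Real.sqrt (a*b)) p (Real.sqrt_pos.mpr (by positivity))).const_mul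
    (Real.sqrt (b/a) ^ p)
  apply this.congr
  exact Eventually.of_forall fun t => (key_transform a b p ha hb t).symm

lemma amgm_aux (a u r : ℝ) (ha : 0 < a) : 2*r*u ≤ a/4*u^2 + 4*r^2/a := by
  rw [← sub_nonneg]
  have h : a/4*u^2 + 4*r^2/a - 2*r*u = (a*u - 4*r)^2/(4*a) := by field_simp; ring
  rw [h]; positivity

lemma gig_kernel_le (a b p : ℝ) (ha : 0 < a) (hb : 0 < b) {x : ℝ} (hx : 0 < x) :
    x ^ (p - 1) * Real.exp (-(a * x + b / x) / 2)
      ≤ Real.exp (4*(p-1)^2/a + 4*(p-1)^2/b) := by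
  set q := p - 1 with hq
  rw [Real.rpow_def_of_pos hx, ← Real.exp_add]
  apply Real.exp_le_exp.mpr
  set u := Real.sqrt x with hu
  set r := |q| with hr
  have hr2 : r ^ 2 = q ^ 2 := sq_abs q
  have hr0 : 0 ≤ r := abs_nonneg q
  have hu0 : 0 < u := Real.sqrt_pos.mpr hx
  have hux : u^2 = x := Real.sq_sqrt hx.le
  have hui : 0 < u⁻¹ := inv_pos.mpr hu0
  have hlog : Real.log x = 2 * Real.log u := by
    rw [← hux, sq, Real.log_mul hu0.ne' hu0.ne']; ring
  have h1 : Real.log u ≤ u := (Real.log_le_sub_one_of_pos hu0).trans (by linarith)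
  have h2 : -Real.log u ≤ u⁻¹ := by
    rw [← Real.log_inv]
    exact (Real.log_le_sub_one_of_pos (by positivity)).trans (by linarith)
  have habs : |Real.log u| ≤ u + u⁻¹ := abs_le.mpr ⟨by linarith, by linarith⟩
  have hql : Real.log x * q ≤ 2*(r*u) + 2*(r*u⁻¹) := by
    have e1 : Real.log u * q ≤ |Real.log u| * r := by
      have := le_abs_self (Real.log u * q); rw [abs_mul] at this; linarith
    have e2 : |Real.log u| * r ≤ (u + u⁻¹) * r := mul_le_mul_of_nonneg_right habs hr0
    calc Real.log x * q = 2 * (Real.log u * q) := by rw [hlog]; ring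
    _ ≤ 2 * ((u + u⁻¹) * r) := mul_le_mul_of_nonneg_left (e1.trans e2) (by norm_num)
    _ = 2*(r*u) + 2*(r*u⁻¹) := by ring
  have ha1 : 2*r*u ≤ a/4*u^2 + 4*q^2/a := by
    have := amgm_aux a u r ha; rwa [hr2] at this
  have hb1 : 2*r*u⁻¹ ≤ b/4*(u⁻¹)^2 + 4*q^2/b := by
    have := amgm_aux b u⁻¹ r hb; rwa [hr2] at this
  have hbx : b / x = b * (u⁻¹)^2 := by rw [← hux]; field_simp
  have hax : a * x = a * u^2 := by rw [hux]
  rw [hax, hbx]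
  nlinarith [sq_nonneg u, sq_nonneg u⁻¹, mul_pos ha (mul_pos hu0 hu0),
    mul_pos hb (mul_pos hui hui)]

lemma gigDensity_nonneg (a b p : ℝ) (ha : 0 < a) (hb : 0 < b) (x : ℝ) :
    0 ≤ gigDensity a b p x := by
  unfold gigDensity
  split
  · have hK := besselK_pos p (show 0 < Real.sqrt (a*b) from Real.sqrt_pos.mpr (by positivity))
    have : (0:ℝ) ≤ (a / b) ^ (p / 2) := Real.rpow_nonneg (by positivity) _
    positivity
  · exact le_refl 0

lemma measurable_gigDensity (a b p : ℝ) : Measurable (gigDensity a b p) := by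
  unfold gigDensity
  refine Measurable.ite (measurableSet_lt measurable_const measurable_id) ?_ measurable_const
  refine Measurable.mul (Measurable.mul measurable_const ?_) ?_
  · measurability
  · apply Real.measurable_exp.comp
    apply Measurable.div _ measurable_const
    apply Measurable.neg
    exact (measurable_const.mul measurable_id).add (measurable_const.div measurable_id)

lemma gigDensity_le (a b p : ℝ) (ha : 0 < a) (hb : 0 < b) (x : ℝ) :
    gigDensity a b p x ≤ (a / b) ^ (p / 2) / (2 * besselK p (Real.sqrt (a * b)))
      * Real.exp (4*(p-1)^2/a + 4*(p-1)^2/b) := by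
  have hK := besselK_pos p (show 0 < Real.sqrt (a*b) from Real.sqrt_pos.mpr (by positivity))
  have hC : 0 ≤ (a / b) ^ (p / 2) / (2 * besselK p (Real.sqrt (a * b))) := by
    have : (0:ℝ) ≤ (a / b) ^ (p / 2) := Real.rpow_nonneg (by positivity) _
    positivity
  unfold gigDensity
  split
  · rw [mul_assoc]
    exact mul_le_mul_of_nonneg_left (gig_kernel_le a b p ha hb (by assumption)) hC
  · positivity

lemma integrableOn_exp_mul_gig (a b p c : ℝ) (ha : 0 < a) (hb : 0 < b) (hc : 0 < a - 2*c) :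
    IntegrableOn (fun x => Real.exp (c*x) * gigDensity a b p x) (Set.Ioi 0) := by
  have hK := besselK_pos p (show 0 < Real.sqrt (a*b) from Real.sqrt_pos.mpr (by positivity))
  have h := ((integrableOn_kernel_gig (a - 2*c) b p hc hb).const_mul
    ((a / b) ^ (p / 2) / (2 * besselK p (Real.sqrt (a * b)))))
  apply IntegrableOn.congr_fun h _ measurableSet_Ioi
  intro x hx
  simp only [gigDensity, if_pos (show (0:ℝ) < x from hx)]
  have key : Real.exp (-((a - 2*c) * x + b / x) / 2)
      = Real.exp (c*x) * Real.exp (-(a * x + b / x) / 2) := by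
    rw [← Real.exp_add]; congr 1; ring
  rw [key]; ring

lemma integral_exp_mul_gig (a b p c : ℝ) (ha : 0 < a) (hb : 0 < b) (hc : 0 < a - 2*c) :
    ∫ x in Set.Ioi (0:ℝ), Real.exp (c*x) * gigDensity a b p x
      = (a/(a-2*c)) ^ (p/2) * besselK p (Real.sqrt (b*(a-2*c))) / besselK p (Real.sqrt (b*a)) := by
  have hK := besselK_pos p (show 0 < Real.sqrt (a*b) from Real.sqrt_pos.mpr (by positivity))
  have step : ∫ x in Set.Ioi (0:ℝ), Real.exp (c*x) * gigDensity a b p x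
      = ((a / b) ^ (p / 2) / (2 * besselK p (Real.sqrt (a * b)))) *
          ∫ x in Set.Ioi (0:ℝ), x ^ (p-1) * Real.exp (-((a-2*c)*x + b/x)/2) := by
    rw [← integral_const_mul]
    apply setIntegral_congr_fun measurableSet_Ioi
    intro x hx
    simp only [gigDensity, if_pos (show (0:ℝ) < x from hx)]
    have key : Real.exp (-((a - 2*c) * x + b / x) / 2)
        = Real.exp (c*x) * Real.exp (-(a * x + b / x) / 2) := by
      rw [← Real.exp_add]; congr 1; ring
    rw [key]; ring
  rw [step, integral_kernel_gig (a-2*c) b p hc hb]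
  have h1 : (a / b) ^ (p / 2) * (b/(a-2*c)) ^ (p/2) = (a/(a-2*c)) ^ (p/2) := by
    rw [← Real.mul_rpow (by positivity) (by positivity)]
    congr 1
    field_simp
  have h2 : Real.sqrt ((a-2*c)*b) = Real.sqrt (b*(a-2*c)) := by rw [mul_comm]
  have h3 : Real.sqrt (a*b) = Real.sqrt (b*a) := by rw [mul_comm]
  rw [h2, h3] at *
  field_simp
  rw [← h1]
  ring

lemma lintegral_exp_mul_gig (a b p c : ℝ) (ha : 0 < a) (hb : 0 < b) (hc : 0 < a - 2*c) :
    ∫⁻ x, ENNReal.ofReal (Real.exp (c*x) * gigDensity a b p x)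
      = ENNReal.ofReal
          ((a/(a-2*c)) ^ (p/2) * besselK p (Real.sqrt (b*(a-2*c))) / besselK p (Real.sqrt (b*a))) := by
  have hvan : ∀ x : ℝ, x ∉ Set.Ioi (0:ℝ) →
      ENNReal.ofReal (Real.exp (c*x) * gigDensity a b p x) = 0 := by
    intro x hx
    have hx' : ¬ (0 < x) := by simpa using hx
    simp [gigDensity, hx']
  have hres : ∫⁻ x, ENNReal.ofReal (Real.exp (c*x) * gigDensity a b p x)
      = ∫⁻ x in Set.Ioi (0:ℝ), ENNReal.ofReal (Real.exp (c*x) * gigDensity a b p x) := by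
    rw [← lintegral_indicator measurableSet_Ioi]
    apply lintegral_congr
    intro x
    by_cases hx : x ∈ Set.Ioi (0:ℝ)
    · rw [Set.indicator_of_mem hx]
    · rw [Set.indicator_of_notMem hx, hvan x hx]
  rw [hres, ← ofReal_integral_eq_lintegral_ofReal (integrableOn_exp_mul_gig a b p c ha hb hc)]
  · rw [integral_exp_mul_gig a b p c ha hb hc]
  · exact (ae_restrict_iff' measurableSet_Ioi).mpr (Eventually.of_forall fun x hx =>
      mul_nonneg (Real.exp_pos _).le (gigDensity_nonneg a b p ha hb x))

variable {ap bp pp am bm pm : ℝ}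

lemma gigDensity_eq_zero {a b p x : ℝ} (hx : ¬ 0 < x) : gigDensity a b p x = 0 := by
  simp [gigDensity, hx]

lemma integrableOn_gig_conv (hap : 0 < ap) (hbp : 0 < bp) (ham : 0 < am) (hbm : 0 < bm) (x : ℝ) :
    IntegrableOn (fun y => gigDensity ap bp pp (x + y) * gigDensity am bm pm y) (Set.Ioi 0) := by
  set M := (ap / bp) ^ (pp / 2) / (2 * besselK pp (Real.sqrt (ap * bp)))
      * Real.exp (4*(pp-1)^2/ap + 4*(pp-1)^2/bp) with hM
  have hgm : IntegrableOn (gigDensity am bm pm) (Set.Ioi 0) := by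
    have h := integrableOn_exp_mul_gig am bm pm 0 ham hbm (by linarith)
    apply h.congr_fun _ measurableSet_Ioi
    intro y _; simp
  refine (hgm.const_mul M).mono' ?_ ?_
  · exact (((measurable_gigDensity ap bp pp).comp (measurable_const.add measurable_id)).mul
      (measurable_gigDensity am bm pm)).aestronglyMeasurable
  · refine (ae_restrict_iff' measurableSet_Ioi).mpr (Eventually.of_forall fun y _ => ?_)
    rw [Real.norm_eq_abs, abs_of_nonneg (mul_nonneg (gigDensity_nonneg ap bp pp hap hbp _)
      (gigDensity_nonneg am bm pm ham hbm _))]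
    exact mul_le_mul_of_nonneg_right (gigDensity_le ap bp pp hap hbp _)
      (gigDensity_nonneg am bm pm ham hbm _)

lemma ofReal_bgig (hap : 0 < ap) (hbp : 0 < bp) (ham : 0 < am) (hbm : 0 < bm) (x : ℝ) :
    ENNReal.ofReal (bgigDensity ap bp pp am bm pm x)
      = ∫⁻ y in Set.Ioi (0:ℝ),
          ENNReal.ofReal (gigDensity ap bp pp (x + y) * gigDensity am bm pm y) := by
  rw [bgigDensity]
  rw [ofReal_integral_eq_lintegral_ofReal (integrableOn_gig_conv hap hbp ham hbm x)]
  exact (ae_restrict_iff' measurableSet_Ioi).mpr (Eventually.of_forall fun y _ =>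
    mul_nonneg (gigDensity_nonneg ap bp pp hap hbp _) (gigDensity_nonneg am bm pm ham hbm _))

lemma lintegral_exp_bgig (hap : 2 < ap) (hbp : 0 < bp) (ham : 0 < am) (hbm : 0 < bm) :
    ∫⁻ x, ENNReal.ofReal (Real.exp x * bgigDensity ap bp pp am bm pm x)
      = ENNReal.ofReal
          ((ap/(ap-2)) ^ (pp/2) * besselK pp (Real.sqrt (bp*(ap-2))) / besselK pp (Real.sqrt (bp*ap)))
        * ENNReal.ofReal
          ((am/(am+2)) ^ (pm/2) * besselK pm (Real.sqrt (bm*(am+2))) / besselK pm (Real.sqrt (bm*am))) := by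
  have hap0 : 0 < ap := by linarith
  -- the elementary integrand
  set F : ℝ → ℝ → ℝ≥0∞ := fun x y =>
    ENNReal.ofReal (Real.exp x * (gigDensity ap bp pp (x + y) * gigDensity am bm pm y)) with hF
  have hmeasF : Measurable (Function.uncurry F) := by
    apply ENNReal.measurable_ofReal.comp
    apply Measurable.mul
    · exact Real.measurable_exp.comp measurable_fst
    · exact ((measurable_gigDensity ap bp pp).comp (measurable_fst.add measurable_snd)).mul
        ((measurable_gigDensity am bm pm).comp measurable_snd)
  have step1 : ∫⁻ x, ENNReal.ofReal (Real.exp x * bgigDensity ap bp pp am bm pm x)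
      = ∫⁻ x, ∫⁻ y in Set.Ioi (0:ℝ), F x y := by
    apply lintegral_congr
    intro x
    rw [ENNReal.ofReal_mul (Real.exp_pos x).le, ofReal_bgig hap0 hbp ham hbm x,
      ← lintegral_const_mul _ (by
        exact ENNReal.measurable_ofReal.comp (((measurable_gigDensity ap bp pp).comp
          (measurable_const.add measurable_id)).mul ((measurable_gigDensity am bm pm))))]
    apply lintegral_congr
    intro y
    rw [hF, ← ENNReal.ofReal_mul (Real.exp_pos x).le]
  rw [step1]
  rw [lintegral_lintegral_swap (hmeasF.aemeasurable)]
  -- inner integral in x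
  have inner : ∀ y : ℝ, (∫⁻ x, F x y)
      = ENNReal.ofReal (Real.exp (-(1:ℝ) * y) * gigDensity am bm pm y)
        * ∫⁻ u, ENNReal.ofReal (Real.exp ((1:ℝ)*u) * gigDensity ap bp pp u) := by
    intro y
    have hG : Measurable (fun u => ENNReal.ofReal (Real.exp ((1:ℝ)*u) * gigDensity ap bp pp u)) :=
      ENNReal.measurable_ofReal.comp ((Real.measurable_exp.comp (measurable_const.mul
        measurable_id)).mul (measurable_gigDensity ap bp pp))
    have hG' : Measurable fun x : ℝ =>
        ENNReal.ofReal (Real.exp ((1:ℝ)*(x+y)) * gigDensity ap bp pp (x+y)) :=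
      hG.comp (measurable_id'.add_const y)
    have key : ∀ x : ℝ, F x y
        = ENNReal.ofReal (Real.exp (-(1:ℝ) * y) * gigDensity am bm pm y)
          * ENNReal.ofReal (Real.exp ((1:ℝ)*(x+y)) * gigDensity ap bp pp (x+y)) := by
      intro x
      rw [← ENNReal.ofReal_mul (mul_nonneg (Real.exp_pos _).le
        (gigDensity_nonneg am bm pm ham hbm y))]
      simp only [hF]
      congr 1
      rw [show Real.exp x = Real.exp (-(1:ℝ)*y) * Real.exp ((1:ℝ)*(x+y)) by
        rw [← Real.exp_add]; congr 1; ring]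
      ring
    simp_rw [key]
    rw [lintegral_const_mul _ hG']
    congr 1
    exact lintegral_add_right_eq_self
      (fun u => ENNReal.ofReal (Real.exp ((1:ℝ)*u) * gigDensity ap bp pp u)) y
  simp_rw [inner]
  have hH : Measurable fun y : ℝ => ENNReal.ofReal (Real.exp (-(1:ℝ)*y) * gigDensity am bm pm y) :=
    ENNReal.measurable_ofReal.comp ((Real.measurable_exp.comp
      (measurable_const.mul measurable_id)).mul (measurable_gigDensity am bm pm))
  rw [lintegral_mul_const _ hH]
  have hIoi : ∫⁻ y in Set.Ioi (0:ℝ), ENNReal.ofReal (Real.exp (-(1:ℝ) * y) * gigDensity am bm pm y)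
      = ∫⁻ y, ENNReal.ofReal (Real.exp (-(1:ℝ) * y) * gigDensity am bm pm y) := by
    rw [← lintegral_indicator measurableSet_Ioi]
    apply lintegral_congr
    intro y
    by_cases hy : y ∈ Set.Ioi (0:ℝ)
    · rw [Set.indicator_of_mem hy]
    · rw [Set.indicator_of_notMem hy, gigDensity_eq_zero (by simpa using hy), mul_zero,
        ENNReal.ofReal_zero]
  rw [hIoi]
  rw [lintegral_exp_mul_gig ap bp pp 1 hap0 hbp (by linarith),
    lintegral_exp_mul_gig am bm pm (-1) ham hbm (by linarith)]
  rw [show am - 2*(-1:ℝ) = am + 2 by ring, show ap - 2*(1:ℝ) = ap - 2 by ring]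
  rw [mul_comm]

section PartB
variable {Ω : Type*} [m : MeasurableSpace Ω] (μ : MeasureTheory.Measure Ω)
  [IsProbabilityMeasure μ] (𝓕 : MeasureTheory.Filtration ℝ≥0 m) (X : ℝ≥0 → Ω → ℝ)

lemma measurable_bgigDensity (ap bp pp am bm pm : ℝ) :
    Measurable (bgigDensity ap bp pp am bm pm) := by
  have hsm : StronglyMeasurable (fun z : ℝ × ℝ =>
      gigDensity ap bp pp (z.1 + z.2) * gigDensity am bm pm z.2) :=
    (((measurable_gigDensity ap bp pp).comp (measurable_fst.add measurable_snd)).mul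
      ((measurable_gigDensity am bm pm).comp measurable_snd)).stronglyMeasurable
  exact hsm.integral_prod_right'.measurable

namespace LevyAux

variable {μ} {𝓕} {X}

lemma measX (hLevy : IsLevyProcess μ 𝓕 X) (u : ℝ≥0) : Measurable (X u) :=
  ((hLevy.adapted u)).mono (𝓕.le u) le_rfl

noncomputable def phi (μ : MeasureTheory.Measure Ω) (X : ℝ≥0 → Ω → ℝ) (t : ℝ≥0) : ℝ≥0∞ :=
  ∫⁻ ω, ENNReal.ofReal (Real.exp (X t ω)) ∂μ

lemma measOE : Measurable fun x : ℝ => ENNReal.ofReal (Real.exp x) :=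
  ENNReal.measurable_ofReal.comp Real.measurable_exp

lemma phi_incr (hLevy : IsLevyProcess μ 𝓕 X) (s t : ℝ≥0) :
    ∫⁻ ω, ENNReal.ofReal (Real.exp (X (s + t) ω - X s ω)) ∂μ = phi μ X t := by
  have h1 : ∫⁻ ω, ENNReal.ofReal (Real.exp (X (s + t) ω - X s ω)) ∂μ
      = ∫⁻ x, ENNReal.ofReal (Real.exp x) ∂(μ.map (fun ω => X (s + t) ω - X s ω)) :=
    (lintegral_map measOE ((measX hLevy (s+t)).sub (measX hLevy s))).symm
  rw [h1, hLevy.stationary_increments s t, lintegral_map measOE (measX hLevy t)]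
  rfl

lemma phi_add (hLevy : IsLevyProcess μ 𝓕 X) (s t : ℝ≥0) :
    phi μ X (s + t) = phi μ X s * phi μ X t := by
  have hdecomp : ∀ ω, ENNReal.ofReal (Real.exp (X (s+t) ω))
      = ENNReal.ofReal (Real.exp (X (s+t) ω - X s ω)) * ENNReal.ofReal (Real.exp (X s ω)) := by
    intro ω
    rw [← ENNReal.ofReal_mul (Real.exp_pos _).le, ← Real.exp_add, sub_add_cancel]
  have hswap : phi μ X (s+t) = ∫⁻ ω,
      ENNReal.ofReal (Real.exp (X (s+t) ω - X s ω)) * ENNReal.ofReal (Real.exp (X s ω)) ∂μ :=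
    lintegral_congr hdecomp
  have hf : Measurable[MeasurableSpace.comap (fun ω => X (s+t) ω - X s ω) Real.measurableSpace]
      (fun ω => ENNReal.ofReal (Real.exp (X (s+t) ω - X s ω))) :=
    measOE.comp (Measurable.of_comap_le le_rfl)
  have hg : Measurable[𝓕 s] (fun ω => ENNReal.ofReal (Real.exp (X s ω))) :=
    measOE.comp (hLevy.adapted s)
  rw [hswap, ProbabilityTheory.lintegral_mul_eq_lintegral_mul_lintegral_of_independent_measurableSpace
    (Measurable.comap_le ((measX hLevy (s+t)).sub (measX hLevy s))) (𝓕.le s)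
    (hLevy.indep_increments s (s+t) le_self_add) hf hg]
  rw [phi_incr hLevy s t, mul_comm]
  rfl

lemma phi_zero (hLevy : IsLevyProcess μ 𝓕 X) : phi μ X 0 = 1 := by
  have : phi μ X 0 = ∫⁻ _, 1 ∂μ := by
    apply lintegral_congr_ae
    filter_upwards [hLevy.zero] with ω h
    rw [h, Real.exp_zero, ENNReal.ofReal_one]
  rw [this, lintegral_one, measure_univ]

lemma phi_nat_mul (hLevy : IsLevyProcess μ 𝓕 X) (n : ℕ) (t : ℝ≥0) :
    phi μ X ((n : ℝ≥0) * t) = phi μ X t ^ n := by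
  induction n with
  | zero => simpa using phi_zero hLevy
  | succ k ih =>
      have : ((k+1 : ℕ) : ℝ≥0) * t = (k : ℝ≥0) * t + t := by push_cast; ring
      rw [this, phi_add hLevy, ih, pow_succ]

lemma pow_eq_one_ennreal {a : ℝ≥0∞} {d : ℕ} (hd : d ≠ 0) (h : a ^ d = 1) : a = 1 := by
  rcases lt_trichotomy a 1 with hlt | heq | hgt
  · exfalso
    obtain ⟨k, rfl⟩ := Nat.exists_eq_succ_of_ne_zero hd
    have h2 : a ^ (k+1) ≤ 1 * a := by
      rw [pow_succ]
      exact mul_le_mul_left (pow_le_one' hlt.le k) a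
    rw [h, one_mul] at h2
    exact absurd (h2.trans_lt hlt) (lt_irrefl 1)
  · exact heq
  · exfalso
    obtain ⟨k, rfl⟩ := Nat.exists_eq_succ_of_ne_zero hd
    have h2 : 1 * a ≤ a ^ (k+1) := by
      rw [pow_succ]
      exact mul_le_mul_left (one_le_pow_of_one_le' hgt.le k) a
    rw [h, one_mul] at h2
    exact absurd (hgt.trans_le h2) (lt_irrefl 1)

lemma phi_rat (hLevy : IsLevyProcess μ 𝓕 X) (hphi1 : phi μ X 1 = 1)
    (n d : ℕ) (hd : d ≠ 0) : phi μ X ((n : ℝ≥0) / d) = 1 := by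
  apply pow_eq_one_ennreal hd
  rw [← phi_nat_mul hLevy d]
  have : (d : ℝ≥0) * ((n : ℝ≥0) / d) = (n : ℝ≥0) * 1 := by
    rw [mul_one]
    field_simp
  rw [this, phi_nat_mul hLevy n 1, hphi1, one_pow]

lemma phi_le_one (hLevy : IsLevyProcess μ 𝓕 X) (hphi1 : phi μ X 1 = 1) (t : ℝ≥0) :
    phi μ X t ≤ 1 := by
  -- rational sequence approaching t
  set q : ℕ → ℝ≥0 := fun n => (⌈(t:ℝ) * (n+1)⌉₊ : ℝ≥0) / ((n+1 : ℕ) : ℝ≥0) with hq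
  have hqval : ∀ n, phi μ X (q n) = 1 := fun n =>
    phi_rat hLevy hphi1 ⌈(t:ℝ) * (n+1)⌉₊ (n+1) (Nat.succ_ne_zero n)
  have hqtendsto : Tendsto q atTop (nhds t) := by
    rw [← NNReal.tendsto_coe]
    have hle : ∀ n : ℕ, (t:ℝ) ≤ (q n : ℝ) := by
      intro n
      rw [hq]
      push_cast
      rw [le_div_iff₀ (by positivity)]
      exact Nat.le_ceil _
    have hge : ∀ n : ℕ, (q n : ℝ) ≤ (t:ℝ) + 1/(n+1) := by
      intro n
      rw [hq]
      push_cast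
      rw [div_le_iff₀ (by positivity)]
      have := (Nat.ceil_lt_add_one (by positivity : (0:ℝ) ≤ (t:ℝ) * (n+1))).le
      calc (⌈(t:ℝ) * (n+1)⌉₊ : ℝ) ≤ (t:ℝ) * (n+1) + 1 := this
        _ = ((t:ℝ) + 1/(n+1)) * (n+1) := by field_simp
    have h1 : Tendsto (fun n : ℕ => (t:ℝ) + 1/(n+1)) atTop (nhds ((t:ℝ) + 0)) :=
      tendsto_const_nhds.add tendsto_one_div_add_atTop_nhds_zero_nat
    rw [add_zero] at h1
    exact tendsto_of_tendsto_of_tendsto_of_le_of_le tendsto_const_nhds h1 hle hge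
  -- tendsto in measure
  have hTIM : TendstoInMeasure μ (fun n => X (q n)) atTop (X t) := by
    rw [tendstoInMeasure_iff_dist]
    intro ε hε
    have := (hLevy.stochastically_continuous t ε hε).comp hqtendsto
    simpa [Real.dist_eq, Function.comp_def] using this
  obtain ⟨ns, _, hae⟩ := hTIM.exists_seq_tendsto_ae
  have hliminf : ∀ᵐ ω ∂μ, ENNReal.ofReal (Real.exp (X t ω))
      = Filter.liminf (fun k => ENNReal.ofReal (Real.exp (X (q (ns k)) ω))) atTop := by
    filter_upwards [hae] with ω hω
    exact (((ENNReal.continuous_ofReal.tendsto _).comp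
      ((Real.continuous_exp.tendsto _).comp hω)).liminf_eq).symm
  calc phi μ X t = ∫⁻ ω, Filter.liminf (fun k => ENNReal.ofReal (Real.exp (X (q (ns k)) ω))) atTop ∂μ :=
        lintegral_congr_ae hliminf
    _ ≤ Filter.liminf (fun k => ∫⁻ ω, ENNReal.ofReal (Real.exp (X (q (ns k)) ω)) ∂μ) atTop :=
        lintegral_liminf_le (fun k => measOE.comp (measX hLevy (q (ns k))))
    _ = 1 := by
        have : (fun k => ∫⁻ ω, ENNReal.ofReal (Real.exp (X (q (ns k)) ω)) ∂μ)
            = fun _ => (1:ℝ≥0∞) := funext fun k => hqval (ns k)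
        rw [this, liminf_const]

lemma phi_eq_one (hLevy : IsLevyProcess μ 𝓕 X) (hphi1 : phi μ X 1 = 1) (t : ℝ≥0) :
    phi μ X t = 1 := by
  obtain ⟨n, hn⟩ := exists_nat_ge t
  have hdec : t + ((n : ℝ≥0) - t) = (n : ℝ≥0) := add_tsub_cancel_of_le hn
  have hphin : phi μ X n = 1 := by
    have := phi_rat hLevy hphi1 n 1 one_ne_zero
    simpa using this
  have hmul : phi μ X t * phi μ X ((n : ℝ≥0) - t) = 1 := by
    rw [← phi_add hLevy, hdec, hphin]
  have h1 := phi_le_one hLevy hphi1 t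
  have h2 := phi_le_one hLevy hphi1 ((n : ℝ≥0) - t)
  refine le_antisymm h1 ?_
  calc (1:ℝ≥0∞) = phi μ X t * phi μ X ((n : ℝ≥0) - t) := hmul.symm
    _ ≤ phi μ X t * 1 := mul_le_mul_right h2 _
    _ = phi μ X t := mul_one _

lemma integrable_exp (hLevy : IsLevyProcess μ 𝓕 X) (u : ℝ≥0) (hfin : phi μ X u < ⊤) :
    Integrable (fun ω => Real.exp (X u ω)) μ := by
  refine ⟨(Real.measurable_exp.comp (measX hLevy u)).aestronglyMeasurable, ?_⟩
  rw [hasFiniteIntegral_iff_ofReal (Eventually.of_forall fun ω => (Real.exp_pos _).le)]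
  exact hfin

lemma integral_exp_eq (hLevy : IsLevyProcess μ 𝓕 X) (u : ℝ≥0) :
    ∫ ω, Real.exp (X u ω) ∂μ = (phi μ X u).toReal := by
  rw [integral_eq_lintegral_of_nonneg_ae (Eventually.of_forall fun ω => (Real.exp_pos _).le)
    (Real.measurable_exp.comp (measX hLevy u)).aestronglyMeasurable]
  rfl

lemma phi_incr' (hLevy : IsLevyProcess μ 𝓕 X) {s t : ℝ≥0} (hst : s ≤ t) :
    ∫⁻ ω, ENNReal.ofReal (Real.exp (X t ω - X s ω)) ∂μ = phi μ X (t - s) := by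
  have h := phi_incr hLevy s (t - s)
  rwa [add_tsub_cancel_of_le hst] at h

end LevyAux
end PartB

open LevyAux

/-- Martingale condition for the exponential BGIG stock model: `S_t = S₀ e^{X_t}` is a
martingale iff the Bessel-function expression for `E[e^{X₁}]` equals `1`. -/
theorem expBGIG_martingale_iff {Ω : Type*} [m : MeasurableSpace Ω]
    (μ : MeasureTheory.Measure Ω) [IsProbabilityMeasure μ]
    (𝓕 : MeasureTheory.Filtration ℝ≥0 m) (X : ℝ≥0 → Ω → ℝ)
    (hLevy : IsLevyProcess μ 𝓕 X)
    (ap bp pp am bm pm S0 : ℝ) (hap : 2 < ap) (hbp : 0 < bp) (ham : 0 < am) (hbm : 0 < bm)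
    (hS0 : 0 < S0)
    (hlaw : μ.map (X 1) = (volume : Measure ℝ).withDensity
        fun x => ENNReal.ofReal (bgigDensity ap bp pp am bm pm x)) :
    MeasureTheory.Martingale (fun (t : ℝ≥0) ω => S0 * Real.exp (X t ω)) 𝓕 μ ↔
      (ap / (ap - 2)) ^ (pp / 2)
          * besselK pp (Real.sqrt (bp * (ap - 2))) / besselK pp (Real.sqrt (bp * ap))
        * ((am / (am + 2)) ^ (pm / 2)
          * besselK pm (Real.sqrt (bm * (am + 2))) / besselK pm (Real.sqrt (bm * am))) = 1 := by
  have hap0 : 0 < ap := by linarith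
  set Ep := (ap / (ap - 2)) ^ (pp / 2)
      * besselK pp (Real.sqrt (bp * (ap - 2))) / besselK pp (Real.sqrt (bp * ap)) with hEp
  set Em := (am / (am + 2)) ^ (pm / 2)
      * besselK pm (Real.sqrt (bm * (am + 2))) / besselK pm (Real.sqrt (bm * am)) with hEm
  have hEppos : 0 < Ep := by
    rw [hEp]
    apply div_pos
    · exact mul_pos (Real.rpow_pos_of_pos (div_pos hap0 (by linarith)) _)
        (besselK_pos pp (Real.sqrt_pos.mpr (mul_pos hbp (by linarith))))
    · exact besselK_pos pp (Real.sqrt_pos.mpr (by positivity))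
  have hEmpos : 0 < Em := by
    rw [hEm]
    apply div_pos
    · exact mul_pos (Real.rpow_pos_of_pos (by positivity) _)
        (besselK_pos pm (Real.sqrt_pos.mpr (by positivity)))
    · exact besselK_pos pm (Real.sqrt_pos.mpr (by positivity))
  -- φ(1) = ofReal (Ep * Em)
  have hphi1 : phi μ X 1 = ENNReal.ofReal (Ep * Em) := by
    have h1 : phi μ X 1 = ∫⁻ x, ENNReal.ofReal (Real.exp x) ∂(μ.map (X 1)) :=
      (lintegral_map measOE (measX hLevy 1)).symm
    have hbmeas : Measurable fun x => ENNReal.ofReal (bgigDensity ap bp pp am bm pm x) :=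
      ENNReal.measurable_ofReal.comp (measurable_bgigDensity ap bp pp am bm pm)
    rw [h1, hlaw, lintegral_withDensity_eq_lintegral_mul _ hbmeas measOE]
    simp only [Pi.mul_apply]
    have h2 : ∀ x : ℝ, ENNReal.ofReal (bgigDensity ap bp pp am bm pm x)
        * ENNReal.ofReal (Real.exp x)
        = ENNReal.ofReal (Real.exp x * bgigDensity ap bp pp am bm pm x) := by
      intro x
      rw [mul_comm, ← ENNReal.ofReal_mul (Real.exp_pos x).le]
    rw [lintegral_congr h2, lintegral_exp_bgig hap hbp ham hbm,
      ← ENNReal.ofReal_mul hEppos.le]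
  constructor
  · -- martingale → expression = 1
    intro hM
    have hfin : phi μ X 1 < ⊤ := by rw [hphi1]; exact ENNReal.ofReal_lt_top
    have hintS1 : Integrable (fun ω => S0 * Real.exp (X 1 ω)) μ :=
      (integrable_exp hLevy 1 hfin).const_mul S0
    have hcond := hM.2 0 1 zero_le_one
    have hIntEq : ∫ ω, (μ[fun ω => S0 * Real.exp (X 1 ω)|𝓕 0]) ω ∂μ
        = ∫ ω, S0 * Real.exp (X 1 ω) ∂μ :=
      integral_condExp (𝓕.le 0) (f := fun ω => S0 * Real.exp (X 1 ω))
    have h0 : ∫ ω, (μ[fun ω => S0 * Real.exp (X 1 ω)|𝓕 0]) ω ∂μ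
        = ∫ ω, S0 * Real.exp (X 0 ω) ∂μ := integral_congr_ae hcond
    have hS0int : ∫ ω, S0 * Real.exp (X 0 ω) ∂μ = S0 := by
      have heq : (fun ω => S0 * Real.exp (X 0 ω)) =ᵐ[μ] fun _ => S0 := by
        filter_upwards [hLevy.zero] with ω h
        rw [h, Real.exp_zero, mul_one]
      rw [integral_congr_ae heq, integral_const, probReal_univ, one_smul]
    have hS1int : ∫ ω, S0 * Real.exp (X 1 ω) ∂μ = S0 * (Ep * Em) := by
      rw [integral_const_mul, integral_exp_eq hLevy 1, hphi1,
        ENNReal.toReal_ofReal (by positivity)]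
    have : S0 * (Ep * Em) = S0 * 1 := by
      rw [mul_one, ← hS1int, ← hIntEq, h0, hS0int]
    exact mul_left_cancel₀ hS0.ne' this
  · -- expression = 1 → martingale
    intro hE
    have hphi1' : phi μ X 1 = 1 := by rw [hphi1, hE, ENNReal.ofReal_one]
    have hphi : ∀ u : ℝ≥0, phi μ X u = 1 := phi_eq_one hLevy hphi1'
    have hfin : ∀ u : ℝ≥0, phi μ X u < ⊤ := fun u => by rw [hphi u]; exact ENNReal.one_lt_top
    constructor
    · intro u
      exact stronglyMeasurable_const.mul
        (Real.continuous_exp.comp_stronglyMeasurable (hLevy.adapted u).stronglyMeasurable)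
    · intro s t hst
      set g := fun ω => Real.exp (X t ω - X s ω) with hg
      have hmeasinc : Measurable fun ω => X t ω - X s ω := (measX hLevy t).sub (measX hLevy s)
      have hphiinc : ∫⁻ ω, ENNReal.ofReal (g ω) ∂μ = 1 := by
        rw [hg]
        rw [phi_incr' hLevy hst, hphi]
      have hintg : Integrable g μ := by
        refine ⟨(Real.measurable_exp.comp hmeasinc).aestronglyMeasurable, ?_⟩
        rw [hasFiniteIntegral_iff_ofReal (Eventually.of_forall fun ω => (Real.exp_pos _).le),
          hphiinc]
        exact ENNReal.one_lt_top
      have hintg_val : ∫ ω, g ω ∂μ = 1 := by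
        rw [integral_eq_lintegral_of_nonneg_ae (Eventually.of_forall fun ω => (Real.exp_pos _).le)
          (Real.measurable_exp.comp hmeasinc).aestronglyMeasurable, hphiinc, ENNReal.toReal_one]
      have hSt_decomp : (fun ω => S0 * Real.exp (X t ω))
          = (fun ω => S0 * Real.exp (X s ω)) * g := by
        funext ω
        simp only [Pi.mul_apply, hg]
        rw [mul_assoc, ← Real.exp_add]
        congr 2
        ring
      have hintSt : Integrable ((fun ω => S0 * Real.exp (X s ω)) * g) μ := by
        rw [← hSt_decomp]
        exact (integrable_exp hLevy t (hfin t)).const_mul S0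
      have hf : StronglyMeasurable[𝓕 s] (fun ω => S0 * Real.exp (X s ω)) :=
        stronglyMeasurable_const.mul
          (Real.continuous_exp.comp_stronglyMeasurable (hLevy.adapted s).stronglyMeasurable)
      have hgSM : StronglyMeasurable[MeasurableSpace.comap (fun ω => X t ω - X s ω)
          Real.measurableSpace] g :=
        (Real.measurable_exp.comp (Measurable.of_comap_le le_rfl)).stronglyMeasurable
      have hcondg : μ[g|𝓕 s] =ᵐ[μ] fun _ => ∫ ω, g ω ∂μ :=
        MeasureTheory.condExp_indep_eq (Measurable.comap_le hmeasinc) (𝓕.le s) hgSM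
          (hLevy.indep_increments s t hst)
      show μ[fun ω => S0 * Real.exp (X t ω)|𝓕 s] =ᵐ[μ] fun ω => S0 * Real.exp (X s ω)
      rw [hSt_decomp]
      refine (condExp_mul_of_stronglyMeasurable_left hf hintSt hintg).trans ?_
      filter_upwards [hcondg] with ω hω
      simp only [Pi.mul_apply, hω, hintg_val, mul_one]
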